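/- Let 0 < r₀ ∈ ℝ. If d : [r₀,+∞) → [0,∞) is a function (bounded, with d(R) → 0 as R → +∞), then there exists an increasing function Q : [r₀,+∞) → [0,∞) such that (i) Q(x)/x → 0 as x → +∞, and (ii) d(R) · ln(R/r) ≤ ∫_r^R (Q(x)/x²) dx for all r₀ ≤ r < R < +∞. -/

import Mathlib

open MeasureTheory Set Filter

theorem stmt_12 (r₀ : ℝ) (hr₀ : 0 < r₀) (d : ℝ → ℝ)
    (hd_nonneg : ∀ R ∈ Set.Ici r₀, 0 ≤ d R)
    (hd_bdd : ∃ C : ℝ, ∀ R ∈ Set.Ici r₀, d R ≤ C)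
    (hd_lim : Filter.Tendsto d Filter.atTop (nhds 0)) :
    ∃ Q : ℝ → ℝ,
      MonotoneOn Q (Set.Ici r₀) ∧
      (∀ x ∈ Set.Ici r₀, 0 ≤ Q x) ∧
      Filter.Tendsto (fun x => Q x / x) Filter.atTop (nhds 0) ∧
      (∀ r R : ℝ, r₀ ≤ r → r < R →
        d R * Real.log (R / r) ≤ ∫ x in r..R, Q x / x ^ 2) := by
  obtain ⟨C, hC⟩ := hd_bdd
  have hC0 : 0 ≤ C := le_trans (hd_nonneg r₀ (Set.mem_Ici.2 le_rfl)) (hC r₀ (Set.mem_Ici.2 le_rfl))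
  set s : ℝ → ℝ := fun x => sSup (d '' Ici (max x r₀)) with hs_def
  have hsbdd : ∀ x, BddAbove (d '' Ici (max x r₀)) := by
    intro x
    refine ⟨C, ?_⟩
    rintro _ ⟨t, ht, rfl⟩
    exact hC t (Set.mem_Ici.2 (le_trans (le_max_right _ _) ht))
  have hsne : ∀ x, (d '' Ici (max x r₀)).Nonempty := fun x =>
    ⟨d (max x r₀), ⟨max x r₀, Set.mem_Ici.2 le_rfl, rfl⟩⟩
  have hs_nonneg : ∀ x, 0 ≤ s x := by
    intro x
    have := le_csSup (hsbdd x) (show d (max x r₀) ∈ d '' Ici (max x r₀) from ⟨max x r₀, Set.mem_Ici.2 le_rfl, rfl⟩)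
    exact le_trans (hd_nonneg _ (Set.mem_Ici.2 (le_max_right _ _))) this
  have hs_le_C : ∀ x, s x ≤ C := by
    intro x
    apply csSup_le (hsne x)
    rintro _ ⟨t, ht, rfl⟩
    exact hC t (Set.mem_Ici.2 (le_trans (le_max_right _ _) ht))
  have hs_anti : Antitone s := by
    intro x y hxy
    apply csSup_le_csSup (hsbdd x) (hsne y)
    exact image_mono (Ici_subset_Ici.2 (max_le_max hxy le_rfl))
  have hs_ge : ∀ x R, x ≤ R → r₀ ≤ R → d R ≤ s x := by
    intro x R hxR hR
    exact le_csSup (hsbdd x) ⟨R, Set.mem_Ici.2 (max_le hxR hR), rfl⟩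
  -- Q
  set Q : ℝ → ℝ := fun x => sSup ((fun y => y * s y) '' Icc r₀ (max x r₀)) with hQ_def
  have hQbdd : ∀ x, BddAbove ((fun y => y * s y) '' Icc r₀ (max x r₀)) := by
    intro x
    refine ⟨max x r₀ * C, ?_⟩
    rintro _ ⟨y, ⟨hy1, hy2⟩, rfl⟩
    exact mul_le_mul hy2 (hs_le_C y) (hs_nonneg y) (le_trans (le_of_lt hr₀) (le_trans hy1 hy2))
  have hQne : ∀ x, ((fun y => y * s y) '' Icc r₀ (max x r₀)).Nonempty := fun x =>
    ⟨r₀ * s r₀, ⟨r₀, ⟨le_rfl, le_max_right _ _⟩, rfl⟩⟩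
  have hQ_mono : Monotone Q := by
    intro x y hxy
    apply csSup_le_csSup (hQbdd y) (hQne x)
    exact image_mono (Icc_subset_Icc le_rfl (max_le_max hxy le_rfl))
  have hQ_nonneg : ∀ x, 0 ≤ Q x := by
    intro x
    have := le_csSup (hQbdd x) (⟨r₀, ⟨le_rfl, le_max_right _ _⟩, rfl⟩ :
      r₀ * s r₀ ∈ (fun y => y * s y) '' Icc r₀ (max x r₀))
    exact le_trans (mul_nonneg hr₀.le (hs_nonneg r₀)) this
  have hQ_ge : ∀ x, r₀ ≤ x → x * s x ≤ Q x := by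
    intro x hx
    exact le_csSup (hQbdd x) ⟨x, ⟨hx, le_max_left _ _⟩, rfl⟩
  have hQ_split : ∀ a x, r₀ ≤ a → a ≤ x → Q x ≤ max (Q a) (x * s a) := by
    intro a x ha hax
    apply csSup_le (hQne x)
    rintro _ ⟨y, ⟨hy1, hy2⟩, rfl⟩
    have hy2' : y ≤ x := le_trans hy2 (max_le le_rfl (le_trans ha hax))
    rcases le_or_gt y a with h | h
    · exact le_trans (le_csSup (hQbdd a) ⟨y, ⟨hy1, le_trans h (le_max_left _ _)⟩, rfl⟩)
        (le_max_left _ _)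
    · refine le_trans ?_ (le_max_right _ _)
      have : s y ≤ s a := hs_anti h.le
      have hy0 : 0 ≤ y := le_trans (le_trans hr₀.le ha) h.le
      calc y * s y ≤ y * s a := mul_le_mul_of_nonneg_left this hy0
        _ ≤ x * s a := mul_le_mul_of_nonneg_right hy2' (hs_nonneg a)
  -- s tends to 0 in the weak sense needed
  have hs_small : ∀ ε > 0, ∃ a, r₀ ≤ a ∧ s a ≤ ε := by
    intro ε hε
    have := (hd_lim.eventually (eventually_le_nhds (show (0:ℝ) < ε from hε))).and
      (eventually_ge_atTop r₀)
    obtain ⟨N, hN⟩ := this.exists_forall_of_atTop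
    refine ⟨max N r₀, le_max_right _ _, ?_⟩
    apply csSup_le (hsne _)
    rintro _ ⟨t, ht, rfl⟩
    have htN : N ≤ t := le_trans (le_trans (le_max_left _ _) (le_max_left _ _)) ht
    exact (hN t htN).1
  refine ⟨Q, hQ_mono.monotoneOn _, fun x _ => hQ_nonneg x, ?_, ?_⟩
  · -- tendsto Q x / x → 0
    rw [Metric.tendsto_atTop]
    intro ε hε
    obtain ⟨a, ha, hsa⟩ := hs_small (ε/2) (by linarith)
    refine ⟨max (max a 1) (Q a / (ε/2) + 1), fun x hx => ?_⟩
    have hxa : a ≤ x := le_trans (le_trans (le_max_left _ _) (le_max_left _ _)) hx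
    have hx1 : (1:ℝ) ≤ x := le_trans (le_trans (le_max_right _ _) (le_max_left _ _)) hx
    have hx0 : (0:ℝ) < x := lt_of_lt_of_le one_pos hx1
    have hxQ : Q a / (ε/2) < x := lt_of_lt_of_le (lt_add_one _) (le_trans (le_max_right _ _) hx)
    have hQa : Q a < x * (ε/2) := by
      have := (div_lt_iff₀ (show (0:ℝ) < ε/2 by linarith)).1 hxQ
      linarith [this]
    have hsplit := hQ_split a x ha hxa
    have hQx : Q x < x * ε := by
      rcases max_cases (Q a) (x * s a) with ⟨h, _⟩ | ⟨h, _⟩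
      · rw [h] at hsplit; nlinarith
      · rw [h] at hsplit
        have : x * s a ≤ x * (ε/2) := mul_le_mul_of_nonneg_left hsa hx0.le
        nlinarith
    rw [Real.dist_eq, sub_zero, abs_of_nonneg (div_nonneg (hQ_nonneg x) hx0.le)]
    rw [div_lt_iff₀ hx0]
    linarith [hQx]
  · -- integral inequality
    intro r R hr hrR
    have hr0 : 0 < r := lt_of_lt_of_le hr₀ hr
    have hR0 : 0 < R := lt_trans hr0 hrR
    have hne : ∀ x ∈ uIcc r R, x ≠ 0 := by
      intro x hx
      rw [uIcc_of_le hrR.le] at hx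
      exact ne_of_gt (lt_of_lt_of_le hr0 hx.1)
    have hint1 : IntervalIntegrable (fun x => Q x / x ^ 2) volume r R := by
      have hQi : IntervalIntegrable Q volume r R :=
        (hQ_mono.monotoneOn _).intervalIntegrable
      have : IntervalIntegrable (fun x => Q x * (x ^ 2)⁻¹) volume r R := by
        apply hQi.mul_continuousOn
        exact ContinuousOn.inv₀ (by fun_prop) (fun x hx => pow_ne_zero 2 (hne x hx))
      simpa [div_eq_mul_inv] using this
    have hint2 : IntervalIntegrable (fun x => d R / x) volume r R := by
      apply ContinuousOn.intervalIntegrable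
      exact ContinuousOn.div continuousOn_const continuousOn_id hne
    have hmono : ∀ x ∈ Icc r R, d R / x ≤ Q x / x ^ 2 := by
      intro x hx
      have hx0 : 0 < x := lt_of_lt_of_le hr0 hx.1
      have h1 : d R ≤ s x := hs_ge x R hx.2 (le_trans hr hrR.le)
      have h2 : x * s x ≤ Q x := hQ_ge x (le_trans hr hx.1)
      rw [div_le_div_iff₀ hx0 (by positivity)]
      nlinarith
    have hcalc : ∫ x in r..R, d R / x = d R * Real.log (R / r) := by
      have : (fun x => d R / x) = fun x => d R * (1 / x) := by
        funext x; ring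
      rw [this, intervalIntegral.integral_const_mul, integral_one_div (by
        intro h
        exact hne 0 h rfl)]
    rw [← hcalc]
    exact intervalIntegral.integral_mono_on hrR.le hint2 hint1 hmono
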